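/- For a vector ψ ∈ ℝ^d with nonnegative entries sorted in nonincreasing order, and integer 1 ≤ m ≤ d, the m-distillation norm is given by the closed formula ‖ψ‖_{[m]} = Σ_{i=1}^{m−k*} ψ_i + √(k*) · (Σ_{i=m−k*+1}^{d} ψ_i²)^{1/2}, where k* is a minimizer over 1 ≤ k ≤ m of (1/√k)(Σ_{i=m−k+1}^{d} ψ_i²)^{1/2}. -/

import Mathlib

open Matrix BigOperators Complex ComplexOrder

noncomputable section

variable {ι : Type*} [Fintype ι] [DecidableEq ι]

/-- A density matrix: positive semidefinite with unit trace. -/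
def IsDensityMatrix (ρ : Matrix ι ι ℂ) : Prop := ρ.PosSemidef ∧ ρ.trace = 1

/-- The rank-one projector |ψ⟩⟨ψ| associated to a vector. -/
def pureState (ψ : ι → ℂ) : Matrix ι ι ℂ := Matrix.of fun i j => ψ i * (starRingEnd ℂ) (ψ j)

/-- Square root of a PSD matrix (the former `Matrix.PosSemidef.sqrt`). -/
def psdSqrt {A : Matrix ι ι ℂ} (hA : A.PosSemidef) : Matrix ι ι ℂ :=
  hA.1.eigenvectorUnitary.1 * diagonal ((↑) ∘ (√·) ∘ hA.1.eigenvalues) *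
    (star hA.1.eigenvectorUnitary : Matrix ι ι ℂ)

/-- The trace norm ‖A‖₁ = Tr √(AᴴA). -/
def traceNorm (A : Matrix ι ι ℂ) : ℝ :=
  ((psdSqrt (Matrix.posSemidef_conjTranspose_mul_self A)).trace).re

open Classical in
/-- Matrix square root (junk value 0 on matrices that are not PSD). -/
def matSqrt (A : Matrix ι ι ℂ) : Matrix ι ι ℂ := if h : A.PosSemidef then psdSqrt h else 0

/-- Fidelity F(ρ,σ) = ‖√ρ√σ‖₁². -/
def fidelity (ρ σ : Matrix ι ι ℂ) : ℝ := (traceNorm (matSqrt ρ * matSqrt σ))^2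

/-- The dephasing map Δ, keeping only the diagonal. -/
def deph (ρ : Matrix ι ι ℂ) : Matrix ι ι ℂ := Matrix.diagonal (fun i => ρ i i)

/-- The m-distillation norm ‖ψ‖_{[m]} = min_x (‖ψ-x‖₁ + √m ‖x‖₂). -/
def distNorm (m : ℕ) (ψ : ι → ℂ) : ℝ :=
  ⨅ x : ι → ℂ, ((∑ i, ‖ψ i - x i‖) +
    Real.sqrt m * Real.sqrt (∑ i, (‖x i‖)^2))

/-- M_m: convex combinations of pure states with ℓ∞ norm at most 1/√m. -/
def Mset (m : ℕ) : Set (Matrix ι ι ℂ) :=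
  {ω | ∃ (n : ℕ) (p : Fin n → ℝ) (ψ : Fin n → ι → ℂ),
    (∀ i, 0 ≤ p i) ∧ (∑ i, p i = 1) ∧
    (∀ i, ∑ j, (‖ψ i j‖)^2 = 1) ∧
    (∀ i j, ‖ψ i j‖ ≤ 1 / Real.sqrt m) ∧
    ω = ∑ i, p i • pureState (ψ i)}

/-- N_m: density matrices with all diagonal entries at most 1/m. -/
def Nset (m : ℕ) : Set (Matrix ι ι ℂ) :=
  {ω | IsDensityMatrix ω ∧ ∀ i, (ω i i).re ≤ 1 / m}

/-- Optimal fidelity of assisted distillation F_A(ρ,m) = max_{ω ∈ M_m} F(ρ,ω). -/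
def FA (ρ : Matrix ι ι ℂ) (m : ℕ) : ℝ :=
  sSup {r : ℝ | ∃ ω ∈ Mset (ι := ι) m, r = fidelity ρ ω}


private lemma tail_split {d : ℕ} (f : Fin d → ℝ) (a : ℕ) (ha : a < d) :
    ∑ i ∈ Finset.univ.filter (fun i : Fin d => a ≤ i.val), f i
      = f ⟨a, ha⟩ + ∑ i ∈ Finset.univ.filter (fun i : Fin d => a + 1 ≤ i.val), f i := by
  have h : Finset.univ.filter (fun i : Fin d => a ≤ i.val)
      = insert ⟨a, ha⟩ (Finset.univ.filter (fun i : Fin d => a + 1 ≤ i.val)) := by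
    ext i
    simp [Fin.ext_iff]
    omega
  rw [h, Finset.sum_insert (by simp)]

private lemma head_card {d : ℕ} (c : ℕ) (hc : c ≤ d) :
    (Finset.univ.filter (fun i : Fin d => i.val < c)).card = c := by
  have h : Finset.univ.filter (fun i : Fin d => i.val < c)
      = Finset.map (Fin.castLEEmb hc) Finset.univ := by
    ext i
    simp only [Finset.mem_filter, Finset.mem_univ, true_and, Finset.mem_map,
      Fin.castLEEmb_apply]
    constructor
    · intro hi; exact ⟨⟨i.val, hi⟩, rfl⟩
    · rintro ⟨a, rfl⟩; exact a.isLt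
  rw [h]; simp

private lemma lower_aux {d : ℕ} (m : ℕ) (ψ ω : Fin d → ℝ)
    (hω1 : ∀ i, |ω i| ≤ 1) (hω2 : ∑ i, ω i ^ 2 ≤ (m : ℝ)) (x : Fin d → ℂ) :
    ∑ i, ω i * ψ i ≤
      (∑ i, ‖(ψ i : ℂ) - x i‖) +
        Real.sqrt m * Real.sqrt (∑ i, (‖x i‖)^2) := by
  have h1 : ∀ i ∈ Finset.univ, ω i * (ψ i - (x i).re) ≤ ‖(ψ i : ℂ) - x i‖ := by
    intro i _
    calc ω i * (ψ i - (x i).re) ≤ |ω i * (ψ i - (x i).re)| := le_abs_self _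
      _ = |ω i| * |ψ i - (x i).re| := abs_mul _ _
      _ ≤ 1 * |ψ i - (x i).re| := mul_le_mul_of_nonneg_right (hω1 i) (abs_nonneg _)
      _ = |((ψ i : ℂ) - x i).re| := by simp
      _ ≤ ‖(ψ i : ℂ) - x i‖ := Complex.abs_re_le_norm _
  have h2 : ∑ i, ω i * (x i).re ≤ Real.sqrt m * Real.sqrt (∑ i, (‖x i‖)^2) := by
    calc ∑ i, ω i * (x i).re
        ≤ Real.sqrt (∑ i, ω i ^ 2) * Real.sqrt (∑ i, ((x i).re)^2) :=
          Real.sum_mul_le_sqrt_mul_sqrt _ _ _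
      _ ≤ Real.sqrt m * Real.sqrt (∑ i, (‖x i‖)^2) := by
          have hterm : ∀ i ∈ Finset.univ, ((x i).re)^2 ≤ (‖x i‖)^2 := by
            intro i _
            rw [← _root_.sq_abs]
            exact pow_le_pow_left₀ (abs_nonneg _) (Complex.abs_re_le_norm _) 2
          exact mul_le_mul (Real.sqrt_le_sqrt hω2)
            (Real.sqrt_le_sqrt (Finset.sum_le_sum hterm)) (Real.sqrt_nonneg _)
            (Real.sqrt_nonneg _)
  have h3 := Finset.sum_le_sum h1
  have h4 : ∑ i, ω i * ψ i = ∑ i, ω i * (ψ i - (x i).re) + ∑ i, ω i * (x i).re := by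
    rw [← Finset.sum_add_distrib]
    exact Finset.sum_congr rfl fun i _ => by ring
  linarith

theorem stmt7 {d : ℕ} (ψ : Fin d → ℝ) (hpos : ∀ i, 0 ≤ ψ i)
    (hsort : ∀ i j : Fin d, i ≤ j → ψ j ≤ ψ i)
    (m : ℕ) (hm : 1 ≤ m) (hmd : m ≤ d)
    (k : ℕ) (hk : k ∈ Finset.Icc 1 m)
    (hmin : ∀ l ∈ Finset.Icc 1 m,
      (1 / Real.sqrt k) *
        Real.sqrt (∑ i ∈ Finset.univ.filter (fun i : Fin d => m - k ≤ i.val), (ψ i)^2) ≤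
      (1 / Real.sqrt l) *
        Real.sqrt (∑ i ∈ Finset.univ.filter (fun i : Fin d => m - l ≤ i.val), (ψ i)^2)) :
    distNorm m (fun i => (ψ i : ℂ)) =
      (∑ i ∈ Finset.univ.filter (fun i : Fin d => i.val < m - k), ψ i) +
      Real.sqrt k *
        Real.sqrt (∑ i ∈ Finset.univ.filter (fun i : Fin d => m - k ≤ i.val), (ψ i)^2) := by
  obtain ⟨hk1, hkm⟩ := Finset.mem_Icc.mp hk
  simp only [distNorm]
  set c := m - k with hcdef
  have hckm : c + k = m := by omega
  have hcd : c < d := by omega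
  have hcled : c ≤ d := by omega
  have hckmR : (c:ℝ) + (k:ℝ) = (m:ℝ) := by exact_mod_cast hckm
  set Tl := Finset.univ.filter (fun i : Fin d => c ≤ i.val) with hTl
  set T2 := ∑ i ∈ Tl, (ψ i)^2 with hT2def
  have hT2 : 0 ≤ T2 := Finset.sum_nonneg fun i _ => sq_nonneg _
  set T := Real.sqrt T2 with hTdef
  have hT : 0 ≤ T := Real.sqrt_nonneg _
  have hTT : T^2 = T2 := Real.sq_sqrt hT2
  set sk := Real.sqrt (k:ℝ) with hskdef
  have hkrpos : (0:ℝ) < (k:ℝ) := by exact_mod_cast Nat.pos_of_ne_zero (by omega)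
  have hskpos : 0 < sk := Real.sqrt_pos.mpr hkrpos
  have hsk2 : sk^2 = (k:ℝ) := Real.sq_sqrt (le_of_lt hkrpos)
  set H := Finset.univ.filter (fun i : Fin d => i.val < c) with hH
  have hHcard : H.card = c := by rw [hH]; exact head_card c hcled
  -- splitting sums
  have hsplit : ∀ g : Fin d → ℝ, ∑ i, g i = ∑ i ∈ H, g i + ∑ i ∈ Tl, g i := by
    intro g
    rw [hH, hTl,
      ← Finset.sum_filter_add_sum_filter_not Finset.univ (fun i : Fin d => i.val < c) g]
    congr 2
    ext i
    simp [not_lt]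
  -- key inequality 1 : on the head, T ≤ sk * ψ i
  have key1 : ∀ i : Fin d, i.val < c → T ≤ sk * ψ i := by
    intro i hi
    have hc1 : 1 ≤ c := by omega
    have hj : c - 1 < d := by omega
    have hl := hmin (k+1) (Finset.mem_Icc.mpr ⟨by omega, by omega⟩)
    have hmk1 : m - (k+1) = c - 1 := by omega
    rw [hmk1, tail_split (fun i => (ψ i)^2) (c-1) hj,
      show c - 1 + 1 = c from by omega] at hl
    set j : Fin d := ⟨c - 1, hj⟩ with hjdef
    have hy : (0:ℝ) ≤ (ψ j)^2 + T2 := by positivity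
    have hsq := pow_le_pow_left₀ (by positivity) hl 2
    rw [mul_pow, mul_pow, hTT, Real.sq_sqrt hy, div_pow, div_pow, one_pow,
      hsk2, Real.sq_sqrt (Nat.cast_nonneg _)] at hsq
    have hk10 : (0:ℝ) < ((k+1:ℕ):ℝ) := by positivity
    rw [div_mul_eq_mul_div, div_mul_eq_mul_div, one_mul, one_mul,
      div_le_div_iff₀ hkrpos hk10] at hsq
    push_cast at hsq
    have hjψ : T2 ≤ (k:ℝ) * (ψ j)^2 := by
      have hring : ((ψ j)^2 + T2) * (k:ℝ) - T2 * ((k:ℝ)+1) = (k:ℝ)*(ψ j)^2 - T2 := by ring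
      linarith [hsq, hring]
    have hTle : T ≤ sk * ψ j := by
      have h := Real.sqrt_le_sqrt hjψ
      rwa [← hTdef, Real.sqrt_mul (le_of_lt hkrpos), Real.sqrt_sq (hpos j), ← hskdef] at h
    have hij : ψ j ≤ ψ i := hsort i j (by rw [Fin.le_def]; simp [hjdef]; omega)
    calc T ≤ sk * ψ j := hTle
      _ ≤ sk * ψ i := mul_le_mul_of_nonneg_left hij (le_of_lt hskpos)
  -- key inequality 2 : on the tail, sk * ψ i ≤ T
  have key2 : ∀ i : Fin d, c ≤ i.val → sk * ψ i ≤ T := by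
    intro i hi
    set i0 : Fin d := ⟨c, hcd⟩ with hi0
    have hmem : i0 ∈ Tl := by simp [hTl, hi0]
    have hstep : (k:ℝ) * (ψ i0)^2 ≤ T2 := by
      rcases eq_or_lt_of_le hk1 with h1 | h2
      · have hs : (ψ i0)^2 ≤ T2 := by
          rw [hT2def]
          exact Finset.single_le_sum (f := fun i => (ψ i)^2) (fun i _ => sq_nonneg _) hmem
        rw [← h1]; push_cast; linarith
      · have hl := hmin (k-1) (Finset.mem_Icc.mpr ⟨by omega, by omega⟩)
        have hmk1 : m - (k-1) = c + 1 := by omega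
        rw [hmk1] at hl
        set T2' := ∑ i ∈ Finset.univ.filter (fun i : Fin d => c + 1 ≤ i.val), (ψ i)^2
          with hT2'def
        have hT2'0 : 0 ≤ T2' := Finset.sum_nonneg fun i _ => sq_nonneg _
        have hTsplit : T2 = (ψ i0)^2 + T2' := by
          rw [hT2def, hTl]; exact tail_split (fun i => (ψ i)^2) c hcd
        have hsq := pow_le_pow_left₀ (by positivity) hl 2
        rw [mul_pow, mul_pow, hTT, Real.sq_sqrt hT2'0, div_pow, div_pow, one_pow,
          hsk2, Real.sq_sqrt (Nat.cast_nonneg _)] at hsq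
        have hk10 : (0:ℝ) < ((k-1:ℕ):ℝ) := by
          exact_mod_cast Nat.pos_of_ne_zero (by omega)
        rw [div_mul_eq_mul_div, div_mul_eq_mul_div, one_mul, one_mul,
          div_le_div_iff₀ hkrpos hk10] at hsq
        rw [Nat.cast_sub hk1] at hsq
        push_cast at hsq
        have hT2'eq : T2' = T2 - (ψ i0)^2 := by linarith [hTsplit]
        rw [hT2'eq] at hsq
        have hring : (T2 - (ψ i0)^2) * (k:ℝ) - T2 * ((k:ℝ) - 1) = T2 - (k:ℝ)*(ψ i0)^2 := by
          ring
        linarith [hsq, hring]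
    have h1 : sk * ψ i ≤ sk * ψ i0 :=
      mul_le_mul_of_nonneg_left (hsort i0 i (by rw [Fin.le_def]; simpa [hi0] using hi))
        (le_of_lt hskpos)
    have h2 : sk * ψ i0 ≤ T := by
      have h := Real.sqrt_le_sqrt hstep
      rwa [← hTdef, Real.sqrt_mul (le_of_lt hkrpos), Real.sqrt_sq (hpos i0), ← hskdef] at h
    linarith
  -- vanishing of the tail when T = 0
  have hψT0 : ∀ i : Fin d, c ≤ i.val → T = 0 → ψ i = 0 := by
    intro i hi h0
    have h := key2 i hi
    rw [h0] at h
    have h2 : 0 ≤ sk * ψ i := mul_nonneg (le_of_lt hskpos) (hpos i)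
    have h3 : sk * ψ i = 0 := le_antisymm h h2
    exact (mul_eq_zero.mp h3).resolve_left (ne_of_gt hskpos)
  -- the dual vector ω
  set ω : Fin d → ℝ := fun i => if i.val < c then 1 else sk * ψ i / T with hωdef
  have hω1 : ∀ i, |ω i| ≤ 1 := by
    intro i
    by_cases h : i.val < c
    · simp [hωdef, h]
    · push_neg at h
      simp only [hωdef, if_neg (not_lt.mpr h)]
      rcases eq_or_lt_of_le hT with h0 | h0
      · rw [hψT0 i h h0.symm]; simp
      · rw [_root_.abs_of_nonneg (div_nonneg (mul_nonneg hskpos.le (hpos i)) hT), div_le_one h0]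
        exact key2 i h
  have hω2 : ∑ i, ω i ^ 2 ≤ (m:ℝ) := by
    rw [hsplit]
    have hHsum : ∑ i ∈ H, ω i ^ 2 = (c:ℝ) := by
      have he : ∀ i ∈ H, ω i ^ 2 = 1 := by
        intro i hi
        have hic : i.val < c := by rw [hH] at hi; simpa using hi
        simp [hωdef, hic]
      rw [Finset.sum_congr rfl he, Finset.sum_const, hHcard, nsmul_eq_mul, mul_one]
    have hTsum : ∑ i ∈ Tl, ω i ^ 2 ≤ (k:ℝ) := by
      rcases eq_or_lt_of_le hT with h0 | h0
      · have he : ∀ i ∈ Tl, ω i ^ 2 = 0 := by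
          intro i hi
          have hci : c ≤ i.val := by rw [hTl] at hi; simpa using hi
          simp [hωdef, not_lt.mpr hci, hψT0 i hci h0.symm]
        rw [Finset.sum_congr rfl he, Finset.sum_const_zero]
        positivity
      · have hT2pos : 0 < T2 := by rw [← hTT]; exact pow_pos h0 2
        have he : ∀ i ∈ Tl, ω i ^ 2 = (k:ℝ)/T2 * (ψ i)^2 := by
          intro i hi
          have hci : c ≤ i.val := by rw [hTl] at hi; simpa using hi
          simp only [hωdef, if_neg (not_lt.mpr hci)]
          rw [div_pow, mul_pow, hsk2, ← hTT]
          ring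
        rw [Finset.sum_congr rfl he, ← Finset.mul_sum, ← hT2def,
          div_mul_eq_mul_div, mul_div_assoc, div_self (ne_of_gt hT2pos), mul_one]
    linarith
  have hωψ : ∑ i, ω i * ψ i = (∑ i ∈ H, ψ i) + sk * T := by
    rw [hsplit]
    congr 1
    · apply Finset.sum_congr rfl
      intro i hi
      have hic : i.val < c := by rw [hH] at hi; simpa using hi
      simp [hωdef, hic]
    · rcases eq_or_lt_of_le hT with h0 | h0
      · have he : ∀ i ∈ Tl, ω i * ψ i = 0 := by
          intro i hi
          have hci : c ≤ i.val := by rw [hTl] at hi; simpa using hi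
          simp [hψT0 i hci h0.symm]
        rw [Finset.sum_congr rfl he, Finset.sum_const_zero, ← h0, mul_zero]
      · have he : ∀ i ∈ Tl, ω i * ψ i = sk / T * (ψ i)^2 := by
          intro i hi
          have hci : c ≤ i.val := by rw [hTl] at hi; simpa using hi
          simp only [hωdef, if_neg (not_lt.mpr hci)]
          ring
        rw [Finset.sum_congr rfl he, ← Finset.mul_sum, ← hT2def, ← hTT]
        field_simp
  -- the primal candidate x₀
  set τ : ℝ := T / sk with hτdef
  have hτ0 : 0 ≤ τ := by positivity
  have hτψ : ∀ i : Fin d, i.val < c → τ ≤ ψ i := by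
    intro i hi
    rw [hτdef, div_le_iff₀ hskpos]
    calc T ≤ sk * ψ i := key1 i hi
      _ = ψ i * sk := mul_comm _ _
  set x₀ : Fin d → ℂ := fun i => if i.val < c then ((τ:ℝ):ℂ) else ((ψ i : ℝ):ℂ) with hx₀def
  have hA : ∑ i, ‖(ψ i : ℂ) - x₀ i‖ = (∑ i ∈ H, ψ i) - (c:ℝ) * τ := by
    rw [hsplit (fun i => ‖(ψ i : ℂ) - x₀ i‖)]
    have he1 : ∀ i ∈ H, ‖(ψ i : ℂ) - x₀ i‖ = ψ i - τ := by
      intro i hi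
      have hic : i.val < c := by rw [hH] at hi; simpa using hi
      simp only [hx₀def, if_pos hic, ← Complex.ofReal_sub, Complex.norm_real, Real.norm_eq_abs]
      exact _root_.abs_of_nonneg (sub_nonneg.mpr (hτψ i hic))
    have he2 : ∀ i ∈ Tl, ‖(ψ i : ℂ) - x₀ i‖ = 0 := by
      intro i hi
      have hci : c ≤ i.val := by rw [hTl] at hi; simpa using hi
      simp [hx₀def, not_lt.mpr hci]
    rw [Finset.sum_congr rfl he1, Finset.sum_congr rfl he2, Finset.sum_const_zero, add_zero,
      Finset.sum_sub_distrib, Finset.sum_const, hHcard, nsmul_eq_mul]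
  have hB : ∑ i, (‖x₀ i‖)^2 = (c:ℝ) * τ^2 + T2 := by
    rw [hsplit (fun i => (‖x₀ i‖)^2)]
    have he1 : ∀ i ∈ H, (‖x₀ i‖)^2 = τ^2 := by
      intro i hi
      have hic : i.val < c := by rw [hH] at hi; simpa using hi
      simp only [hx₀def, if_pos hic, Complex.norm_real, Real.norm_eq_abs, _root_.sq_abs]
    have he2 : ∀ i ∈ Tl, (‖x₀ i‖)^2 = (ψ i)^2 := by
      intro i hi
      have hci : c ≤ i.val := by rw [hTl] at hi; simpa using hi
      simp only [hx₀def, if_neg (not_lt.mpr hci), Complex.norm_real, Real.norm_eq_abs, _root_.sq_abs]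
    rw [Finset.sum_congr rfl he1, Finset.sum_congr rfl he2, ← hT2def,
      Finset.sum_const, hHcard, nsmul_eq_mul]
  have hmm' : Real.sqrt m * Real.sqrt m = (m:ℝ) := Real.mul_self_sqrt (Nat.cast_nonneg _)
  have hB2 : (c:ℝ) * τ^2 + T2 = (m:ℝ) * T2 / (k:ℝ) := by
    have hτsq : τ^2 = T2 / (k:ℝ) := by rw [hτdef, div_pow, hTT, hsk2]
    rw [hτsq]
    field_simp
    linear_combination T2 * hckmR
  have hval2 : Real.sqrt m * Real.sqrt ((c:ℝ) * τ^2 + T2) = (m:ℝ) * τ := by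
    rw [hB2, Real.sqrt_div (by positivity) (k:ℝ), Real.sqrt_mul (Nat.cast_nonneg _) T2,
      ← hTdef, ← hskdef, hτdef]
    field_simp
    linear_combination T * hmm'
  have hkτ : (k:ℝ) * τ = sk * T := by
    rw [hτdef]
    field_simp
    linear_combination T * hsk2.symm
  have hfx₀ : (∑ i, ‖(ψ i : ℂ) - x₀ i‖) +
      Real.sqrt m * Real.sqrt (∑ i, (‖x₀ i‖)^2) = (∑ i ∈ H, ψ i) + sk * T := by
    rw [hA, hB, hval2]
    have : (m:ℝ) * τ - (c:ℝ) * τ = (k:ℝ) * τ := by linear_combination τ * hckmR.symm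
    linarith [hkτ]
  -- conclude
  have hlow : ∀ x : Fin d → ℂ, (∑ i ∈ H, ψ i) + sk * T ≤
      (∑ i, ‖(ψ i : ℂ) - x i‖) +
        Real.sqrt m * Real.sqrt (∑ i, (‖x i‖)^2) := by
    intro x
    rw [← hωψ]
    exact lower_aux m ψ ω hω1 hω2 x
  apply le_antisymm
  · refine le_trans (ciInf_le ⟨(∑ i ∈ H, ψ i) + sk * T, ?_⟩ x₀) (le_of_eq hfx₀)
    rintro r ⟨x, rfl⟩
    exact hlow x
  · exact le_ciInf hlow

end
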